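/- Let K be a field complete with respect to a nontrivial non-Archimedean absolute value, and let Q(t, Z) = Σᵢ bᵢ(t) Zⁱ be a polynomial in Z whose coefficients bᵢ(t) are power series in t converging on a neighborhood of 0 in K, with values in K°. If |Q(0,1)| < 1 and |∂Q/∂Z (0,1)| = 1, then there exists a neighborhood V of 0 and a map Z : V → K° given by a convergent power series such that Q(t, Z(t)) = 0 and |Z(t) − 1| < 1 for all t ∈ V. -/

import Mathlib

open IsUltrametricDist

section AuxLemmas

variable {K : Type*} [NontriviallyNormedField K] [IsUltrametricDist K]

lemma aux_norm_le_one_of_ball {z : K} (h : ‖z - 1‖ ≤ 1) : ‖z‖ ≤ 1 := by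
  calc ‖z‖ = ‖(z - 1) + 1‖ := by ring_nf
  _ ≤ max ‖z - 1‖ ‖(1:K)‖ := norm_add_le_max _ _
  _ ≤ 1 := by simp [h]

lemma aux_mul_sub_one {x y : K} (hx : ‖x‖ ≤ 1) :
    ‖x * y - 1‖ ≤ max ‖x - 1‖ ‖y - 1‖ := by
  have h : x * y - 1 = x * (y - 1) + (x - 1) := by ring
  rw [h]
  refine (norm_add_le_max _ _).trans (max_comm ‖x-1‖ ‖y-1‖ ▸ max_le_max ?_ le_rfl)
  calc ‖x * (y-1)‖ = ‖x‖ * ‖y-1‖ := norm_mul _ _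
  _ ≤ 1 * ‖y - 1‖ := by gcongr
  _ = ‖y - 1‖ := one_mul _

lemma aux_pow_sub_one {z : K} (hz : ‖z‖ ≤ 1) (j : ℕ) : ‖z ^ j - 1‖ ≤ ‖z - 1‖ := by
  induction j with
  | zero => simp
  | succ n ih =>
    have h : ‖z ^ (n+1) - 1‖ ≤ max ‖z - 1‖ ‖z ^ n - 1‖ := by
      rw [pow_succ, mul_comm]
      exact aux_mul_sub_one hz
    exact h.trans (max_le le_rfl ih)

lemma aux_pow_mul_pow_sub_one {z w : K} (hz : ‖z‖ ≤ 1) (hw : ‖w‖ ≤ 1) (j k : ℕ) :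
    ‖z ^ j * w ^ k - 1‖ ≤ max ‖z - 1‖ ‖w - 1‖ := by
  have hp : ‖z ^ j‖ ≤ 1 := by
    rw [norm_pow]; exact pow_le_one₀ (norm_nonneg _) hz
  refine (aux_mul_sub_one hp).trans ?_
  exact max_le_max (aux_pow_sub_one hz j) (aux_pow_sub_one hw k)

/-- Taylor-type difference factorization with ultrametric control. -/
lemma aux_diff_factor (m : ℕ) (a : Fin (m + 1) → K) (ha : ∀ i, ‖a i‖ ≤ 1)
    {z w : K} (hz : ‖z‖ ≤ 1) (hw : ‖w‖ ≤ 1) :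
    ∃ D : K, (∑ i : Fin (m+1), a i * z ^ (i : ℕ)) - (∑ i : Fin (m+1), a i * w ^ (i : ℕ))
        = (z - w) * D ∧
      ‖(∑ i : Fin (m+1), ((i : ℕ) : K) * a i) - D‖ ≤ max ‖z - 1‖ ‖w - 1‖ := by
  refine ⟨∑ i : Fin (m+1), a i * ∑ j ∈ Finset.range (i : ℕ), z ^ j * w ^ ((i : ℕ) - 1 - j),
    ?_, ?_⟩
  · rw [← Finset.sum_sub_distrib, Finset.mul_sum]
    refine Finset.sum_congr rfl fun i _ => ?_
    have h := geom_sum₂_mul z w (i : ℕ)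
    calc a i * z ^ (i:ℕ) - a i * w ^ (i:ℕ) = a i * (z ^ (i:ℕ) - w ^ (i:ℕ)) := by ring
    _ = a i * ((∑ j ∈ Finset.range (i : ℕ), z ^ j * w ^ ((i : ℕ) - 1 - j)) * (z - w)) := by
        rw [h]
    _ = (z - w) * (a i * ∑ j ∈ Finset.range (i : ℕ), z ^ j * w ^ ((i : ℕ) - 1 - j)) := by ring
  · rw [← Finset.sum_sub_distrib]
    refine norm_sum_le_of_forall_le_of_nonneg (le_max_iff.2 (Or.inl (norm_nonneg _))) ?_
    intro i _
    have hcast : (((i : ℕ) : K)) = ∑ _j ∈ Finset.range (i : ℕ), (1 : K) := by simp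
    have h : ((i : ℕ) : K) * a i - a i * ∑ j ∈ Finset.range (i : ℕ), z ^ j * w ^ ((i:ℕ) - 1 - j)
        = a i * ∑ j ∈ Finset.range (i : ℕ), (1 - z ^ j * w ^ ((i:ℕ) - 1 - j)) := by
      rw [hcast, Finset.sum_mul, Finset.mul_sum, ← Finset.sum_sub_distrib, Finset.mul_sum]
      exact Finset.sum_congr rfl fun j _ => by ring
    rw [h]
    calc ‖a i * _‖ = ‖a i‖ * ‖_‖ := norm_mul _ _
    _ ≤ 1 * max ‖z - 1‖ ‖w - 1‖ := by
        refine mul_le_mul (ha i) ?_ (norm_nonneg _) zero_le_one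
        refine norm_sum_le_of_forall_le_of_nonneg
          (le_max_iff.2 (Or.inl (norm_nonneg _))) fun j _ => ?_
        rw [← norm_neg]; simpa [neg_sub] using aux_pow_mul_pow_sub_one hz hw j ((i:ℕ) - 1 - j)
    _ = max ‖z - 1‖ ‖w - 1‖ := one_mul _

/-- Hensel's lemma in a complete ultrametric field, via the Banach fixed point theorem. -/
lemma aux_hensel [CompleteSpace K] (m : ℕ) (a : Fin (m+1) → K) (ha : ∀ i, ‖a i‖ ≤ 1)
    (hc : ‖∑ i : Fin (m+1), a i‖ < 1)
    (hu : ‖∑ i : Fin (m+1), ((i:ℕ):K) * a i‖ = 1) :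
    ∃ z0 : K, (∑ i : Fin (m+1), a i * z0 ^ (i:ℕ)) = 0 ∧
      ‖z0 - 1‖ ≤ ‖∑ i : Fin (m+1), a i‖ := by
  set c : K := ∑ i : Fin (m+1), a i with hcdef
  set u : K := ∑ i : Fin (m+1), ((i:ℕ):K) * a i with hudef
  have hune : u ≠ 0 := by intro h; rw [h] at hu; simp at hu
  set κ : ℝ := ‖c‖ with hκdef
  have hκ0 : 0 ≤ κ := norm_nonneg _
  have hκ1 : κ < 1 := hc
  set Qp : K → K := fun z => ∑ i : Fin (m+1), a i * z ^ (i:ℕ) with hQp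
  have hQp1 : Qp 1 = c := by simp [hQp, hcdef]
  set T : K → K := fun z => z - Qp z / u with hT
  have hmem : ∀ z : K, ‖z - 1‖ ≤ κ → ‖z‖ ≤ 1 := fun z hz =>
    aux_norm_le_one_of_ball (hz.trans hκ1.le)
  have key : ∀ z w : K, ‖z - 1‖ ≤ κ → ‖w - 1‖ ≤ κ → ‖T z - T w‖ ≤ κ * ‖z - w‖ := by
    intro z w hz hw
    obtain ⟨D, hD, hDn⟩ := aux_diff_factor m a ha (hmem z hz) (hmem w hw)
    have e2 : T z - T w = (z - w) * ((u - D) / u) := by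
      have hD' : Qp z - Qp w = (z - w) * D := hD
      calc T z - T w = (z - w) - (Qp z - Qp w)/u := by simp only [hT]; ring
      _ = (z - w) - ((z - w) * D)/u := by rw [hD']
      _ = (z - w) * ((u - D)/u) := by field_simp
    rw [e2, norm_mul, norm_div, hu, div_one, mul_comm]
    gcongr
    exact hDn.trans (max_le hz hw)
  have hmaps : ∀ z : K, ‖z - 1‖ ≤ κ → ‖T z - 1‖ ≤ κ := by
    intro z hz
    have h1 : T 1 - 1 = -(c / u) := by simp [hT, hQp1]
    have h1n : ‖T 1 - 1‖ = κ := by rw [h1, norm_neg, norm_div, hu, div_one]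
    have h2 : ‖T z - T 1‖ ≤ κ * ‖z - 1‖ := key z 1 hz (by simpa using hκ0)
    calc ‖T z - 1‖ = ‖(T z - T 1) + (T 1 - 1)‖ := by ring_nf
    _ ≤ max ‖T z - T 1‖ ‖T 1 - 1‖ := norm_add_le_max _ _
    _ ≤ κ := by
        refine max_le ?_ h1n.le
        refine h2.trans ?_
        calc κ * ‖z - 1‖ ≤ κ * 1 := by gcongr; exact hz.trans hκ1.le
        _ = κ := mul_one κ
  set S : Set K := Metric.closedBall (1:K) κ with hS
  have hmemS : ∀ z : K, z ∈ S ↔ ‖z - 1‖ ≤ κ := fun z => mem_closedBall_iff_norm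
  haveI : CompleteSpace S := Metric.isClosed_closedBall.completeSpace_coe
  have h1S : (1:K) ∈ S := by rw [hmemS]; simpa using hκ0
  set f : S → S := fun z => ⟨T z.1, (hmemS _).2 (hmaps z.1 ((hmemS _).1 z.2))⟩ with hf
  have hcontr : ContractingWith ‖c‖₊ f := by
    constructor
    · exact_mod_cast hc
    · refine LipschitzWith.of_dist_le_mul fun x y => ?_
      have := key x.1 y.1 ((hmemS _).1 x.2) ((hmemS _).1 y.2)
      simpa [Subtype.dist_eq, dist_eq_norm] using this
  obtain ⟨x, hx, -⟩ := hcontr.exists_fixedPoint ⟨1, h1S⟩ (edist_ne_top _ _)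
  have hTx : T x.1 = x.1 := congrArg Subtype.val hx
  have hQx : Qp x.1 = 0 := by
    have h' : x.1 - Qp x.1 / u = x.1 := hTx
    have h0 : Qp x.1 / u = 0 := sub_eq_self.mp h'
    exact (div_eq_zero_iff.mp h0).resolve_right hune
  exact ⟨x.1, hQx, (hmemS _).1 x.2⟩

/-- A pointwise-convergent power series on a closed disc gives a power series expansion at 0. -/
lemma aux_analytic (b : PowerSeries K) (r : ℝ) (hr : 0 < r) (Bf : K → K)
    (hB : ∀ t : K, ‖t‖ ≤ r → HasSum (fun n : ℕ => PowerSeries.coeff n b * t ^ n) (Bf t)) :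
    HasFPowerSeriesAt Bf
      (FormalMultilinearSeries.ofScalars K (fun n => PowerSeries.coeff n b)) 0 := by
  obtain ⟨x, hx0, hxr⟩ := NormedField.exists_norm_lt K hr
  set c : ℕ → K := fun n => PowerSeries.coeff n b with hc
  have hsum := (hB x hxr.le).summable
  have htend : Filter.Tendsto (fun n => ‖c n * x ^ n‖) Filter.atTop (nhds 0) := by
    simpa using hsum.tendsto_atTop_zero.norm
  obtain ⟨C, hC⟩ := htend.bddAbove_range
  refine ⟨‖x‖₊, ?_, ?_, ?_⟩
  · refine FormalMultilinearSeries.le_radius_of_bound _ C fun n => ?_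
    rw [FormalMultilinearSeries.ofScalars_norm K c n]
    have := hC (Set.mem_range_self n)
    rwa [norm_mul, norm_pow] at this
  · exact_mod_cast hx0
  · intro y hy
    rw [EMetric.mem_ball, edist_zero_right] at hy
    have hyn : ‖y‖ ≤ r := by
      refine le_of_lt (lt_trans ?_ hxr)
      exact_mod_cast hy
    have := hB y hyn
    rw [zero_add]
    convert this using 1
    · rfl
    funext n
    rw [FormalMultilinearSeries.ofScalars_apply_eq, smul_eq_mul, mul_comm]

/-- The invertible linear map `(t, z) ↦ (t, v t + u z)` on `K × K`. -/
noncomputable def auxEquiv (u v : K) (hune : u ≠ 0) : (K × K) ≃ₗ[K] (K × K) :=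
  LinearEquiv.ofLinear
    ((LinearMap.fst K K K).prod (v • LinearMap.fst K K K + u • LinearMap.snd K K K))
    ((LinearMap.fst K K K).prod ((-(v/u)) • LinearMap.fst K K K + (u⁻¹) • LinearMap.snd K K K))
    (by ext p <;> simp <;> field_simp <;> ring)
    (by ext p <;> simp <;> field_simp <;> ring)

@[simp] lemma auxEquiv_apply (u v : K) (hune : u ≠ 0) (p : K × K) :
    auxEquiv u v hune p = (p.1, v * p.1 + u * p.2) := by
  simp [auxEquiv, smul_eq_mul]

end AuxLemmas

/-- Let `K` be a field complete with respect to a nontrivial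
non-Archimedean absolute value, and let `Q(t, Z) = Σᵢ bᵢ(t) Zⁱ` be a polynomial in `Z`
whose coefficients `bᵢ(t)` are power series in `t` converging on a neighborhood of `0`
in `K` with values in the closed unit ball `K°`.  If `|Q(0,1)| < 1` and
`|∂Q/∂Z (0,1)| = 1`, then there exist a neighborhood `V = {‖t‖ ≤ ρ}` of `0` and a map
`Z : V → K°` given by a convergent power series such that `Q(t, Z(t)) = 0` and
`|Z(t) − 1| < 1` for all `t ∈ V`. -/
theorem stmt17 {K : Type*} [NontriviallyNormedField K] [IsUltrametricDist K]
    [CompleteSpace K] (m : ℕ) (b : Fin (m + 1) → PowerSeries K)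
    (r : ℝ) (hr : 0 < r) (B : Fin (m + 1) → K → K)
    (hB : ∀ i, ∀ t : K, ‖t‖ ≤ r →
      HasSum (fun n : ℕ => PowerSeries.coeff n (b i) * t ^ n) (B i t))
    (hBval : ∀ i, ∀ t : K, ‖t‖ ≤ r → ‖B i t‖ ≤ 1) :
    let Q : K → K → K := fun t z => ∑ i : Fin (m + 1), B i t * z ^ (i : ℕ)
    let Q' : K → K → K := fun t z =>
      ∑ i : Fin (m + 1), ((i : ℕ) : K) * B i t * z ^ ((i : ℕ) - 1)
    ‖Q 0 1‖ < 1 → ‖Q' 0 1‖ = 1 →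
      ∃ (Zs : PowerSeries K) (ρ : ℝ), 0 < ρ ∧ ∀ t : K, ‖t‖ ≤ ρ →
        ∃ z : K, HasSum (fun n : ℕ => PowerSeries.coeff n Zs * t ^ n) z ∧
          Q t z = 0 ∧ ‖z - 1‖ < 1 ∧ ‖z‖ ≤ 1 := by
  intro Q Q' hQ1 hQ'1
  have hr0 : ‖(0:K)‖ ≤ r := by simp [hr.le]
  have hB0 : ∀ i, ‖B i 0‖ ≤ 1 := fun i => hBval i 0 hr0
  -- power series expansions of the coefficients
  have hBps : ∀ i, HasFPowerSeriesAt (B i)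
      (FormalMultilinearSeries.ofScalars K (fun n => PowerSeries.coeff n (b i))) 0 :=
    fun i => aux_analytic (b i) r hr (B i) (hB i)
  have hBan : ∀ i, AnalyticAt K (B i) 0 := fun i => (hBps i).analyticAt
  -- simplify the hypotheses at (0, 1)
  have hQ1' : ‖∑ i : Fin (m+1), B i 0‖ < 1 := by simpa [Q] using hQ1
  have hQ'1' : ‖∑ i : Fin (m+1), ((i:ℕ):K) * B i 0‖ = 1 := by simpa [Q'] using hQ'1
  -- Hensel's lemma at t = 0 : an exact root z0 of Q(0, ·) close to 1
  obtain ⟨z0, hz0Q, hz0n⟩ := aux_hensel m (fun i => B i 0) hB0 hQ1' hQ'1'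
  have hz01 : ‖z0 - 1‖ < 1 := lt_of_le_of_lt hz0n hQ1'
  have hz0le : ‖z0‖ ≤ 1 := aux_norm_le_one_of_ball hz01.le
  -- the Z-derivative at (0, z0) is a unit
  set u : K := ∑ i : Fin (m+1), ((i:ℕ):K) * B i 0 * z0 ^ ((i:ℕ) - 1) with hudef
  have hun : ‖u‖ = 1 := by
    set u1 : K := ∑ i : Fin (m+1), ((i:ℕ):K) * B i 0 with hu1def
    have hdiff : ‖u - u1‖ < 1 := by
      have he : u - u1 = ∑ i : Fin (m+1), ((i:ℕ):K) * B i 0 * (z0 ^ ((i:ℕ)-1) - 1) := by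
        rw [hudef, hu1def, ← Finset.sum_sub_distrib]
        exact Finset.sum_congr rfl fun i _ => by ring
      rw [he]
      refine lt_of_le_of_lt (norm_sum_le_of_forall_le_of_nonneg (norm_nonneg (z0 - 1))
        fun i _ => ?_) hz01
      rw [norm_mul, norm_mul]
      calc ‖((i:ℕ):K)‖ * ‖B i 0‖ * ‖z0 ^ ((i:ℕ)-1) - 1‖ ≤ 1 * 1 * ‖z0 - 1‖ := by
            gcongr
            · exact norm_natCast_le_one K _
            · exact hB0 i
            · exact aux_pow_sub_one hz0le _
      _ = ‖z0 - 1‖ := by ring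
    have hne : ‖u1‖ ≠ ‖u - u1‖ := by
      rw [hQ'1']
      exact fun h => lt_irrefl _ (h ▸ hdiff)
    have hmax : ‖u1 + (u - u1)‖ = max ‖u1‖ ‖u - u1‖ :=
      norm_add_eq_max_of_norm_ne_norm hne
    rw [add_sub_cancel] at hmax
    rw [hmax, hQ'1', max_eq_left hdiff.le]
  have hune : u ≠ 0 := by intro h; rw [h] at hun; simp at hun
  -- the derivative data
  set v : K := ∑ i : Fin (m+1), z0 ^ (i:ℕ) * deriv (B i) 0 with hvdef
  set eL : (K × K) ≃L[K] (K × K) := (auxEquiv u v hune).toContinuousLinearEquiv with heL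
  set x0 : K × K := ((0:K), z0) with hx0def
  set Qf : K × K → K := fun p => ∑ i : Fin (m+1), B i p.1 * p.2 ^ (i:ℕ) with hQf
  set Ff : K × K → K × K := fun p => (p.1, Qf p) with hFfdef
  set Dsum : (K × K) →L[K] K := ∑ i : Fin (m+1),
      (B i 0 • ((((i:ℕ):K) * z0 ^ ((i:ℕ)-1)) • ContinuousLinearMap.snd K K K)
        + z0 ^ (i:ℕ) • (deriv (B i) 0 • ContinuousLinearMap.fst K K K)) with hDsum
  have hQfd : HasFDerivAt Qf Dsum x0 := by
    refine HasFDerivAt.fun_sum fun i _ => ?_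
    have h1 : HasFDerivAt (fun p : K × K => B i p.1)
        (deriv (B i) 0 • ContinuousLinearMap.fst K K K) x0 := by
      exact HasDerivAt.comp_hasFDerivAt (f := Prod.fst) _
        (((hBan i).differentiableAt).hasDerivAt) hasFDerivAt_fst
    have h2 : HasFDerivAt (fun p : K × K => p.2 ^ (i:ℕ))
        ((((i:ℕ):K) * z0 ^ ((i:ℕ)-1)) • ContinuousLinearMap.snd K K K) x0 := by
      exact HasDerivAt.comp_hasFDerivAt (f := Prod.snd) _ (hasDerivAt_pow (i:ℕ) z0)
        hasFDerivAt_snd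
    exact h1.mul h2
  have hFfd : HasFDerivAt Ff ((ContinuousLinearMap.fst K K K).prod Dsum) x0 :=
    hasFDerivAt_fst.prodMk hQfd
  have hLeq : (ContinuousLinearMap.fst K K K).prod Dsum = (eL : (K × K) →L[K] (K × K)) := by
    apply ContinuousLinearMap.ext
    intro p
    have hcoe2 : (eL : (K × K) →L[K] (K × K)) p = (p.1, v * p.1 + u * p.2) := by
      rw [heL]
      simp [auxEquiv_apply]
    rw [hcoe2]
    refine Prod.ext (by simp) ?_
    show Dsum p = v * p.1 + u * p.2
    rw [hDsum, hudef, hvdef, ContinuousLinearMap.sum_apply, Finset.sum_mul, Finset.sum_mul,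
      ← Finset.sum_add_distrib]
    refine Finset.sum_congr rfl fun i _ => ?_
    simp only [ContinuousLinearMap.add_apply, ContinuousLinearMap.smul_apply,
      ContinuousLinearMap.coe_fst', ContinuousLinearMap.coe_snd', smul_eq_mul]
    ring
  -- analyticity of Ff at x0
  have hQfan : AnalyticAt K Qf x0 := by
    refine Finset.analyticAt_fun_sum _ fun i _ => ?_
    have hc1 : AnalyticAt K (fun p : K × K => B i p.1) x0 := by
      exact (hBan i).comp (f := Prod.fst) analyticAt_fst
    exact hc1.mul (analyticAt_snd.pow _)
  have hFan : AnalyticAt K Ff x0 := analyticAt_fst.prod hQfan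
  obtain ⟨pF, hpF⟩ := hFan
  have hstrict := hpF.hasStrictFDerivAt
  have hFfd' : HasFDerivAt Ff ((eL : (K × K) →L[K] (K × K))) x0 := hLeq ▸ hFfd
  have hcurry : continuousMultilinearCurryFin1 K (K × K) (K × K) (pF 1)
      = (eL : (K × K) →L[K] (K × K)) := hstrict.hasFDerivAt.unique hFfd'
  have hstrict' : HasStrictFDerivAt Ff ((eL : (K × K) →L[K] (K × K))) x0 := hcurry ▸ hstrict
  set PH := hstrict'.toOpenPartialHomeomorph Ff with hPH
  have hcoe : ⇑PH = Ff := hstrict'.toOpenPartialHomeomorph_coe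
  have hsrc : x0 ∈ PH.source := hstrict'.mem_toOpenPartialHomeomorph_source
  have hp1 : pF 1 = (continuousMultilinearCurryFin1 K (K × K) (K × K)).symm
      ((eL : (K × K) →L[K] (K × K))) := by
    rw [← hcurry]
    exact (LinearIsometryEquiv.symm_apply_apply _ _).symm
  have hpPH : HasFPowerSeriesAt (⇑PH) pF x0 := by rw [hcoe]; exact hpF
  have hsymm := PH.hasFPowerSeriesAt_symm hsrc hpPH hp1
  have hQfx0 : Qf x0 = 0 := by
    rw [hQf, hx0def]
    simpa using hz0Q
  have hval : PH x0 = ((0:K), (0:K)) := by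
    rw [hcoe]
    exact Prod.ext rfl hQfx0
  rw [hval] at hsymm
  -- the solution function
  set W : K → K × K := fun t => PH.symm (t, (0:K)) with hW
  have hinner : AnalyticAt K (fun t : K => ((t, (0:K)) : K × K)) 0 :=
    analyticAt_id.prod analyticAt_const
  have hWan : AnalyticAt K W 0 := by
    exact (hsymm.analyticAt).comp (f := fun t : K => ((t, (0:K)) : K × K)) hinner
  set Z : K → K := fun t => (W t).2 with hZ
  have hZan : AnalyticAt K Z 0 := by
    exact analyticAt_snd.comp (f := W) hWan
  have hW0 : W 0 = x0 := by
    have h := PH.left_inv hsrc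
    rw [hval] at h
    exact h
  have hZ0 : Z 0 = z0 := by rw [hZ]; simp only; rw [hW0, hx0def]
  -- eventual properties near 0
  have htgt : ((0:K), (0:K)) ∈ PH.target := hval ▸ PH.map_source hsrc
  have hcont0 : ContinuousAt (fun t : K => ((t, (0:K)) : K × K)) 0 :=
    (continuous_id.prodMk continuous_const).continuousAt
  have hev1 : {t : K | ((t, (0:K)) : K × K) ∈ PH.target} ∈ nhds (0:K) :=
    hcont0 (PH.open_target.mem_nhds htgt)
  have hev2 : {t : K | ‖Z t - z0‖ < 1} ∈ nhds (0:K) := by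
    have hball : {z : K | ‖z - z0‖ < 1} ∈ nhds (Z 0) := by
      rw [hZ0]
      have := Metric.ball_mem_nhds z0 one_pos
      simpa [Metric.ball, dist_eq_norm] using this
    exact hZan.continuousAt hball
  obtain ⟨pZ, hpZat⟩ := hZan
  obtain ⟨rZ, hZball⟩ := hpZat
  have hev3 : EMetric.ball (0:K) rZ ∈ nhds (0:K) := EMetric.ball_mem_nhds _ hZball.r_pos
  have hall := Filter.inter_mem (Filter.inter_mem hev1 hev2) hev3
  obtain ⟨ε, hε, hsub⟩ := Metric.mem_nhds_iff.mp hall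
  refine ⟨PowerSeries.mk (fun n => pZ.coeff n), ε/2, by positivity, ?_⟩
  intro t ht
  have htmem : t ∈ ({t : K | ((t, (0:K)) : K × K) ∈ PH.target}
      ∩ {t : K | ‖Z t - z0‖ < 1}) ∩ EMetric.ball (0:K) rZ := by
    apply hsub
    rw [Metric.mem_ball, dist_zero_right]
    linarith
  obtain ⟨⟨ht1, ht2⟩, ht3⟩ := htmem
  have hZt1 : ‖Z t - 1‖ < 1 := by
    calc ‖Z t - 1‖ = ‖(Z t - z0) + (z0 - 1)‖ := by rw [sub_add_sub_cancel]
    _ ≤ max ‖Z t - z0‖ ‖z0 - 1‖ := norm_add_le_max _ _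
    _ < 1 := max_lt ht2 hz01
  refine ⟨Z t, ?_, ?_, hZt1, aux_norm_le_one_of_ball hZt1.le⟩
  · have hhs := hZball.hasSum (y := t) ht3
    rw [zero_add] at hhs
    have heq : (fun n : ℕ => PowerSeries.coeff n (PowerSeries.mk fun n => pZ.coeff n) * t ^ n)
        = fun n => pZ n fun _ => t := by
      funext n
      rw [PowerSeries.coeff_mk, FormalMultilinearSeries.apply_eq_pow_smul_coeff,
        smul_eq_mul, mul_comm]
    rw [heq]
    exact hhs
  · have hri : PH (PH.symm (t, (0:K))) = ((t, (0:K)) : K × K) := PH.right_inv ht1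
    have hri' : Ff (W t) = ((t, (0:K)) : K × K) := by
      rw [← hcoe, hW]
      exact hri
    have h1 : (W t).1 = t := congrArg Prod.fst hri'
    have h2 : Qf (W t) = 0 := congrArg Prod.snd hri'
    show ∑ i : Fin (m + 1), B i t * (Z t) ^ (i : ℕ) = 0
    rw [hQf] at h2
    simp only at h2
    rw [h1] at h2
    exact h2
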